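/- Suppose the Poincaré series of a Kleinian group Γ converges at exponent α, and let m be an α-conformal measure for Γ. Then every conical limit point z of Γ is contained in a family of shadows S_r(γ_k(y)) with m(S_r(γ_k(y))) ≤ c·exp(-α·d(0, γ_k(y))) and d(0, γ_k(y)) → ∞; consequently m gives zero measure to the conical limit set Λ_c(Γ). -/

import Mathlib

open MeasureTheory

/-- Suppose the Poincaré series of a Kleinian group `Γ` converges at
exponent `α` (i.e. `Σ_{γ∈Γ} exp(-α·d(0, γ(y))) < ∞`, where `d = hd` is the hyperbolic
metric and `o` is the origin), and let `m` be an `α`-conformal measure for `Γ`.  By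
Sullivan's shadow lemma the shadows `S_r(γ(y))` from the origin satisfy
`m(S_r(γ(y))) ≤ c·exp(-α·d(0, γ(y)))`, and every conical limit point `z ∈ Λ_c(Γ)` is
contained in infinitely many of the shadows `S_r(γ(y))`.  Consequently (by a Borel–Cantelli
argument) `m` gives zero measure to the conical limit set `Λ_c(Γ)`. -/
theorem conformal_measure_of_conical_limit_set_zero
    {X : Type*} [MeasurableSpace X] {G : Type*} [Group G] [Countable G] [MulAction G X]
    (hd : X → X → ℝ) (o y : X) (α c : ℝ)
    (m : Measure X)
    (S : G → Set X)  -- `S γ` is the shadow `S_r(γ(y))` from the origin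
    (Λc : Set X)     -- the conical limit set of `Γ`
    (hpoincare : Summable fun γ : G => Real.exp (-α * hd o (γ • y)))
    (hshadow : ∀ γ : G, m (S γ) ≤ ENNReal.ofReal (c * Real.exp (-α * hd o (γ • y))))
    (hconical : ∀ z ∈ Λc, {γ : G | z ∈ S γ}.Infinite) :
    m Λc = 0 := by
  set f : G → ENNReal := fun γ => ENNReal.ofReal (c * Real.exp (-α * hd o (γ • y))) with hf
  -- total mass of the bound series is finite
  have hfin : (∑' γ, f γ) ≠ ⊤ := by
    have hle : ∀ γ : G, f γ ≤ ENNReal.ofReal |c| * ENNReal.ofReal (Real.exp (-α * hd o (γ • y))) := by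
      intro γ
      rw [← ENNReal.ofReal_mul (abs_nonneg c)]
      exact ENNReal.ofReal_le_ofReal <| by
        calc c * Real.exp (-α * hd o (γ • y)) ≤ |c * Real.exp (-α * hd o (γ • y))| := le_abs_self _
        _ = |c| * Real.exp (-α * hd o (γ • y)) := by
            rw [abs_mul, abs_of_nonneg (Real.exp_nonneg _)]
    have hsum : (∑' γ : G, ENNReal.ofReal (Real.exp (-α * hd o (γ • y)))) ≠ ⊤ := by
      have heq := ENNReal.ofReal_tsum_of_nonneg
        (fun γ : G => Real.exp_nonneg (-α * hd o (γ • y))) hpoincare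
      rw [← heq]
      exact ENNReal.ofReal_ne_top
    have h1 : (∑' γ, f γ) ≤ ENNReal.ofReal |c| * ∑' γ : G, ENNReal.ofReal (Real.exp (-α * hd o (γ • y))) := by
      rw [← ENNReal.tsum_mul_left]
      exact ENNReal.tsum_le_tsum hle
    exact ne_top_of_le_ne_top (ENNReal.mul_ne_top ENNReal.ofReal_ne_top hsum) h1
  -- for every finite set F, Λc is covered by the shadows outside F
  have hcover : ∀ F : Finset G, m Λc ≤ ∑' γ : {γ : G // γ ∉ F}, f γ := by
    intro F
    have hsub : Λc ⊆ ⋃ γ : {γ : G // γ ∉ F}, S γ := by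
      intro z hz
      obtain ⟨γ, hγS, hγF⟩ := (hconical z hz).exists_notMem_finset F
      exact Set.mem_iUnion.2 ⟨⟨γ, hγF⟩, hγS⟩
    calc m Λc ≤ m (⋃ γ : {γ : G // γ ∉ F}, S γ) := measure_mono hsub
      _ ≤ ∑' γ : {γ : G // γ ∉ F}, m (S γ) := measure_iUnion_le _
      _ ≤ ∑' γ : {γ : G // γ ∉ F}, f γ := ENNReal.tsum_le_tsum fun γ => hshadow γ
  -- tails tend to 0
  have htail := ENNReal.tendsto_tsum_compl_atTop_zero hfin
  have : m Λc ≤ 0 := ge_of_tendsto htail (Filter.Eventually.of_forall hcover)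
  exact le_antisymm this zero_le
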